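/- Let (a_n) and (b_n) be sequences of complex numbers (or elements of a commutative ring over which the relevant matrices are defined). Then b_n = Σ_{k=0}^{n} G_{a,b}(n,k;r)·a_k holds for all n ≥ 0 if and only if a_n = Σ_{k=0}^{n} (−1)^{n−k}·G_{b,a}(n,k;r)·b_k holds for all n ≥ 0. -/
import Mathlib


open Finset

/-- The generalized r-Lah numbers `G_{a,b}(n,k;r)`. -/
def genLah {R : Type*} [CommRing R] (a b : R) (r : ℕ) : ℕ → ℕ → R
  | 0, 0 => 1
  | 0, _ + 1 => 0
  | n + 1, 0 => (a * ((n : R) + (r : R)) + b * (r : R)) * genLah a b r n 0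
  | n + 1, k + 1 => genLah a b r n k +
      (a * (n : R) + b * ((k : R) + 1) + (a + b) * (r : R)) * genLah a b r n (k + 1)

lemma genLah_eq_zero {R : Type*} [CommRing R] (a b : R) (r : ℕ) :
    ∀ n k, n < k → genLah a b r n k = 0 := by
  intro n
  induction n with
  | zero =>
    intro k hk
    cases k with
    | zero => omega
    | succ k => rfl
  | succ n ih =>
    intro k hk
    cases k with
    | zero => omega
    | succ k =>
      rw [genLah, ih k (by omega), ih (k + 1) (by omega), mul_zero, add_zero]

/-- uniform recurrence -/
lemma genLah_succ {R : Type*} [CommRing R] (a b : R) (r : ℕ) (n k : ℕ) :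
    genLah a b r (n + 1) k = (if k = 0 then 0 else genLah a b r n (k - 1)) +
      (a * (n : R) + b * (k : R) + (a + b) * (r : R)) * genLah a b r n k := by
  cases k with
  | zero => rw [genLah, if_pos rfl]; push_cast; ring
  | succ k => rw [genLah, if_neg (Nat.succ_ne_zero k), Nat.add_sub_cancel]; push_cast; ring

lemma genLah_ortho (a b : ℂ) (r : ℕ) :
    ∀ n j, ∑ k ∈ range (n + 1), (-1 : ℂ) ^ k * genLah a b r n k * genLah b a r k j =
      if j = n then (-1 : ℂ) ^ n else 0 := by
  intro n
  induction n with
  | zero =>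
    intro j
    cases j with
    | zero => simp [genLah]
    | succ j => simp [genLah]
  | succ n ih =>
    intro j
    have step1 : ∑ k ∈ range (n + 2), (-1 : ℂ) ^ k * genLah a b r (n + 1) k * genLah b a r k j
        = ∑ k ∈ range (n + 2), (((-1 : ℂ) ^ k *
            (if k = 0 then 0 else genLah a b r n (k - 1))) * genLah b a r k j
          + (-1 : ℂ) ^ k * ((a * (n : ℂ) + b * (k : ℂ) + (a + b) * (r : ℂ)) *
              genLah a b r n k) * genLah b a r k j) := by
      refine Finset.sum_congr rfl fun k _ => ?_
      rw [genLah_succ]; ring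
    rw [step1, Finset.sum_add_distrib]
    -- second sum: drop the k = n+1 term
    have step2 : ∑ k ∈ range (n + 2), (-1 : ℂ) ^ k * ((a * (n : ℂ) + b * (k : ℂ)
          + (a + b) * (r : ℂ)) * genLah a b r n k) * genLah b a r k j
        = ∑ k ∈ range (n + 1), (-1 : ℂ) ^ k * ((a * (n : ℂ) + b * (k : ℂ)
          + (a + b) * (r : ℂ)) * genLah a b r n k) * genLah b a r k j := by
      rw [Finset.sum_range_succ, genLah_eq_zero a b r n (n + 1) (by omega)]
      simp
    -- first sum: shift index
    have step3 : ∑ k ∈ range (n + 2), ((-1 : ℂ) ^ k *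
          (if k = 0 then 0 else genLah a b r n (k - 1))) * genLah b a r k j
        = ∑ k ∈ range (n + 1), (-1 : ℂ) ^ (k + 1) * genLah a b r n k
            * genLah b a r (k + 1) j := by
      rw [Finset.sum_range_succ']
      simp
    rw [step2, step3, ← Finset.sum_add_distrib]
    cases j with
    | zero =>
      have comb : ∀ k ∈ range (n + 1),
          (-1 : ℂ) ^ (k + 1) * genLah a b r n k * genLah b a r (k + 1) 0
            + (-1 : ℂ) ^ k * ((a * (n : ℂ) + b * (k : ℂ) + (a + b) * (r : ℂ)) *
                genLah a b r n k) * genLah b a r k 0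
          = a * (n : ℂ) * ((-1 : ℂ) ^ k * genLah a b r n k * genLah b a r k 0) := by
        intro k _
        rw [genLah]
        ring
      rw [Finset.sum_congr rfl comb, ← Finset.mul_sum, ih 0]
      rcases eq_or_ne (0 : ℕ) n with h0 | h0
      · rw [if_pos h0, if_neg (by omega), ← h0]
        push_cast; ring
      · rw [if_neg h0, if_neg (by omega), mul_zero]
    | succ j =>
      have comb : ∀ k ∈ range (n + 1),
          (-1 : ℂ) ^ (k + 1) * genLah a b r n k * genLah b a r (k + 1) (j + 1)
            + (-1 : ℂ) ^ k * ((a * (n : ℂ) + b * (k : ℂ) + (a + b) * (r : ℂ)) *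
                genLah a b r n k) * genLah b a r k (j + 1)
          = -((-1 : ℂ) ^ k * genLah a b r n k * genLah b a r k j)
            + (a * (n : ℂ) - a * ((j : ℂ) + 1)) *
                ((-1 : ℂ) ^ k * genLah a b r n k * genLah b a r k (j + 1)) := by
        intro k _
        rw [genLah]
        ring
      rw [Finset.sum_congr rfl comb, Finset.sum_add_distrib, Finset.sum_neg_distrib,
        ← Finset.mul_sum, ih j, ih (j + 1)]
      rcases eq_or_ne j n with hjn | hjn
      · rw [if_pos hjn, if_neg (by omega), if_pos (by omega), ← hjn]
        ring
      · rcases eq_or_ne (j + 1) n with hj1 | hj1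
        · rw [if_neg hjn, if_pos hj1, if_neg (by omega), ← hj1]
          push_cast; ring
        · rw [if_neg hjn, if_neg hj1, if_neg (by omega)]
          simp

lemma neg_one_pow_sub_eq {k n : ℕ} (h : k ≤ n) : (-1 : ℂ) ^ (n - k) = (-1) ^ n * (-1) ^ k := by
  conv_rhs => rw [← Nat.sub_add_cancel h]
  rw [pow_add, mul_assoc, ← mul_pow, neg_mul_neg, one_mul, one_pow, mul_one]

lemma genLah_invert_mp (a b : ℂ) (r : ℕ) (A B : ℕ → ℂ)
    (h : ∀ n, B n = ∑ k ∈ range (n + 1), genLah a b r n k * A k) (n : ℕ) :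
    A n = ∑ k ∈ range (n + 1), (-1 : ℂ) ^ (n - k) * genLah b a r n k * B k := by
  have e1 : ∀ k ∈ range (n + 1), (-1 : ℂ) ^ (n - k) * genLah b a r n k * B k
      = ∑ j ∈ range (n + 1),
          (-1 : ℂ) ^ (n - k) * genLah b a r n k * (genLah a b r k j * A j) := by
    intro k hk
    rw [h k, Finset.mul_sum]
    refine Finset.sum_subset (by intro j hj; simp only [mem_range] at *; omega) ?_
    intro j hj hj'
    simp only [mem_range] at hj hj'
    rw [genLah_eq_zero a b r k j (by omega), zero_mul, mul_zero]
  rw [Finset.sum_congr rfl e1, Finset.sum_comm]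
  have e2 : ∀ j ∈ range (n + 1),
      (∑ k ∈ range (n + 1),
        (-1 : ℂ) ^ (n - k) * genLah b a r n k * (genLah a b r k j * A j))
      = if j = n then A j else 0 := by
    intro j hj
    have tw : ∀ k ∈ range (n + 1),
        (-1 : ℂ) ^ (n - k) * genLah b a r n k * (genLah a b r k j * A j)
        = (-1 : ℂ) ^ n * A j * ((-1) ^ k * genLah b a r n k * genLah a b r k j) := by
      intro k hk
      rw [neg_one_pow_sub_eq (Nat.lt_succ_iff.mp (mem_range.mp hk))]
      ring
    rw [Finset.sum_congr rfl tw, ← Finset.mul_sum, genLah_ortho b a r n j]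
    rcases eq_or_ne j n with hj' | hj'
    · rw [if_pos hj', if_pos hj']
      have h1 : (-1 : ℂ) ^ n * (-1) ^ n = 1 := by rw [← mul_pow]; norm_num
      linear_combination A j * h1
    · rw [if_neg hj', if_neg hj', mul_zero]
  rw [Finset.sum_congr rfl e2, Finset.sum_ite_eq' (range (n + 1)) n A,
    if_pos (mem_range.mpr (by omega))]

lemma genLah_invert_mpr (a b : ℂ) (r : ℕ) (A B : ℕ → ℂ)
    (h : ∀ n, A n = ∑ k ∈ range (n + 1), (-1 : ℂ) ^ (n - k) * genLah b a r n k * B k)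
    (n : ℕ) : B n = ∑ k ∈ range (n + 1), genLah a b r n k * A k := by
  have e1 : ∀ k ∈ range (n + 1), genLah a b r n k * A k
      = ∑ j ∈ range (n + 1),
          genLah a b r n k * ((-1 : ℂ) ^ (k - j) * genLah b a r k j * B j) := by
    intro k hk
    rw [h k, Finset.mul_sum]
    refine Finset.sum_subset (by intro j hj; simp only [mem_range] at *; omega) ?_
    intro j hj hj'
    simp only [mem_range] at hj hj'
    rw [genLah_eq_zero b a r k j (by omega), mul_zero, zero_mul, mul_zero]
  rw [Finset.sum_congr rfl e1, Finset.sum_comm]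
  have e2 : ∀ j ∈ range (n + 1),
      (∑ k ∈ range (n + 1),
        genLah a b r n k * ((-1 : ℂ) ^ (k - j) * genLah b a r k j * B j))
      = if j = n then B j else 0 := by
    intro j hj
    have tw : ∀ k ∈ range (n + 1),
        genLah a b r n k * ((-1 : ℂ) ^ (k - j) * genLah b a r k j * B j)
        = (-1 : ℂ) ^ j * B j * ((-1) ^ k * genLah a b r n k * genLah b a r k j) := by
      intro k hk
      rcases le_or_gt j k with hkj | hkj
      · rw [neg_one_pow_sub_eq hkj]
        ring
      · rw [genLah_eq_zero b a r k j hkj]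
        ring
    rw [Finset.sum_congr rfl tw, ← Finset.mul_sum, genLah_ortho a b r n j]
    rcases eq_or_ne j n with hj' | hj'
    · rw [if_pos hj', if_pos hj', hj']
      have h1 : (-1 : ℂ) ^ n * (-1) ^ n = 1 := by rw [← mul_pow]; norm_num
      linear_combination B n * h1
    · rw [if_neg hj', if_neg hj', mul_zero]
  rw [Finset.sum_congr rfl e2, Finset.sum_ite_eq' (range (n + 1)) n B,
    if_pos (mem_range.mpr (by omega))]

theorem genLah_inversion (a b : ℂ) (r : ℕ) (A B : ℕ → ℂ) :
    (∀ n, B n = ∑ k ∈ range (n + 1), genLah a b r n k * A k) ↔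
      (∀ n, A n = ∑ k ∈ range (n + 1), (-1) ^ (n - k) * genLah b a r n k * B k) := by
  exact ⟨fun h n => genLah_invert_mp a b r A B h n,
    fun h n => genLah_invert_mpr a b r A B h n⟩
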